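/- Let P₁,…,P_s be probability measures on (Ω,𝓕) and g : [0,1]^s → ℝ componentwise increasing with g(0,…,0)=0 and g(1,…,1)=1. Then the set function ν(A) = g(P₁(A),…,P_s(A)) is a capacity: it is monotone, ν(∅)=0, and ν(Ω)=1. Moreover, if g satisfies the two-point inequality g(x₁)+g(x₄) ≤ g(x₂)+g(x₃) for all x₁ ≤ x₂ ≤ x₄, x₁ ≤ x₃ ≤ x₄ with x₁+x₄ = x₂+x₃, then ν is submodular: ν(A∩B) + ν(A∪B) ≤ ν(A) + ν(B) for all A, B ∈ 𝓕. -/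

import Mathlib

open MeasureTheory Set

theorem stmt_14 {Ω : Type*} [MeasurableSpace Ω] (s : ℕ)
    (P : Fin s → Measure Ω) [∀ j, IsProbabilityMeasure (P j)]
    (g : (Fin s → ℝ) → ℝ)
    (hmono : MonotoneOn g (Set.Icc (0 : Fin s → ℝ) 1))
    (hg0 : g 0 = 0) (hg1 : g 1 = 1)
    (ν : Set Ω → ℝ) (hν : ∀ A : Set Ω, ν A = g (fun j => ((P j) A).toReal)) :
    ((∀ A B : Set Ω, MeasurableSet A → MeasurableSet B → A ⊆ B → ν A ≤ ν B) ∧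
      ν ∅ = 0 ∧ ν Set.univ = 1) ∧
    ((∀ x₁ ∈ Set.Icc (0 : Fin s → ℝ) 1, ∀ x₂ ∈ Set.Icc (0 : Fin s → ℝ) 1,
        ∀ x₃ ∈ Set.Icc (0 : Fin s → ℝ) 1, ∀ x₄ ∈ Set.Icc (0 : Fin s → ℝ) 1,
        x₁ ≤ x₂ → x₂ ≤ x₄ → x₁ ≤ x₃ → x₃ ≤ x₄ → x₁ + x₄ = x₂ + x₃ →
        g x₁ + g x₄ ≤ g x₂ + g x₃) →
      ∀ A B : Set Ω, MeasurableSet A → MeasurableSet B →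
        ν (A ∩ B) + ν (A ∪ B) ≤ ν A + ν B) := by
  have hmem : ∀ A : Set Ω, (fun j => ((P j) A).toReal) ∈ Set.Icc (0 : Fin s → ℝ) 1 := by
    intro A
    constructor
    · intro j; exact ENNReal.toReal_nonneg
    · intro j
      simpa using ENNReal.toReal_mono (by simp) (prob_le_one (μ := P j) (s := A))
  have hle : ∀ A B : Set Ω, A ⊆ B →
      (fun j => ((P j) A).toReal) ≤ (fun j => ((P j) B).toReal) := by
    intro A B hAB j
    exact ENNReal.toReal_mono (measure_ne_top _ _) (measure_mono hAB)
  refine ⟨⟨fun A B _ _ hAB => ?_, ?_, ?_⟩, fun h2 A B hA hB => ?_⟩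
  · rw [hν A, hν B]
    exact hmono (hmem A) (hmem B) (hle A B hAB)
  · rw [hν]; simp; exact hg0
  · rw [hν]; simp; exact hg1
  · rw [hν, hν, hν, hν]
    refine h2 _ (hmem _) _ (hmem _) _ (hmem _) _ (hmem _)
      (hle _ _ Set.inter_subset_left) (hle _ _ Set.subset_union_left)
      (hle _ _ Set.inter_subset_right) (hle _ _ Set.subset_union_right) ?_
    funext j
    have key : (P j) (A ∪ B) + (P j) (A ∩ B) = (P j) A + (P j) B :=
      measure_union_add_inter A hB
    have := congrArg ENNReal.toReal key
    rw [ENNReal.toReal_add (measure_ne_top _ _) (measure_ne_top _ _),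
        ENNReal.toReal_add (measure_ne_top _ _) (measure_ne_top _ _)] at this
    simp only [Pi.add_apply]
    linarith
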